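/- The language { a^n b^n : n ≥ 0 } is not accepted by any GRLOWJFA. -/

import Mathlib

open List

/-- Two-letter alphabet. -/
inductive AB : Type | a | b
  deriving DecidableEq, Repr

/-- Three-letter alphabet. -/
inductive ABC : Type | a | b | c
  deriving DecidableEq, Repr

instance : Fintype AB := ⟨⟨{AB.a, AB.b}, by decide⟩, by intro x; cases x <;> decide⟩
instance : Fintype ABC := ⟨⟨{ABC.a, ABC.b, ABC.c}, by decide⟩, by intro x; cases x <;> decide⟩

/-- The Dyck language over the two designated letters `a` (open) and `b` (close):
balanced words using only `a` and `b`. -/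
def Dyck {α : Type} [DecidableEq α] (a b : α) : Set (List α) :=
  {w | (∀ x ∈ w, x = a ∨ x = b) ∧ w.count a = w.count b ∧
       ∀ u, u <+: w → u.count b ≤ u.count a}

/-- `u` contains no word from `S` as a subword (infix). -/
def NoSub {α : Type} (S : Set (List α)) (u : List α) : Prop :=
  ¬ ∃ w ∈ S, w <:+: u

/-! ### Right one-way jumping finite automata -/

structure ROWJFA (α σ : Type) where
  start : σ
  accept : Set σ
  rules : Set (σ × α × σ)
  det : ∀ p a q q', (p, a, q) ∈ rules → (p, a, q') ∈ rules → q = q'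

namespace ROWJFA
variable {α σ : Type}

def sig (A : ROWJFA α σ) (p : σ) : Set α := {a | ∃ q, (p, a, q) ∈ A.rules}

/-- `p x a y ↷ q y x` when `(p,a,q) ∈ R` and `x ∈ (Σ∖Σ_p)*`. -/
inductive Step (A : ROWJFA α σ) : σ × List α → σ × List α → Prop
  | jump {p q : σ} {a : α} (x y : List α) :
      (p, a, q) ∈ A.rules → (∀ b ∈ x, b ∉ A.sig p) →
      Step A (p, x ++ a :: y) (q, y ++ x)

def language (A : ROWJFA α σ) : Set (List α) :=
  {w | ∃ qf ∈ A.accept, Relation.ReflTransGen (Step A) (A.start, w) (qf, [])}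

end ROWJFA

def ROWJ {α : Type} (L : Set (List α)) : Prop :=
  ∃ (σ : Type) (_ : Finite σ) (A : ROWJFA α σ), A.language = L

/-! ### Left one-way jumping finite automata -/

structure LOWJFA (α σ : Type) where
  start : σ
  accept : Set σ
  /-- A rule `(q, a, p)` means: from state `p`, delete `a`, move to state `q`. -/
  rules : Set (σ × α × σ)
  det : ∀ p a q q', (q, a, p) ∈ rules → (q', a, p) ∈ rules → q = q'

namespace LOWJFA
variable {α σ : Type}

def sig (A : LOWJFA α σ) (p : σ) : Set α := {a | ∃ q, (q, a, p) ∈ A.rules}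

/-- `x y q ↶ y a x p` when `(q,a,p) ∈ R` and `x ∈ (Σ∖Σ_p)*`;
configurations are in `Σ* Q`. -/
inductive Step (A : LOWJFA α σ) : List α × σ → List α × σ → Prop
  | jump {p q : σ} {a : α} (x y : List α) :
      (q, a, p) ∈ A.rules → (∀ b ∈ x, b ∉ A.sig p) →
      Step A (y ++ a :: x, p) (x ++ y, q)

def language (A : LOWJFA α σ) : Set (List α) :=
  {w | ∃ qf ∈ A.accept, Relation.ReflTransGen (Step A) (w, A.start) ([], qf)}

end LOWJFA

def LOWJ {α : Type} (L : Set (List α)) : Prop :=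
  ∃ (σ : Type) (_ : Finite σ) (A : LOWJFA α σ), A.language = L

/-! ### Generalized right linear one-way jumping finite automata -/

structure GRLOWJFA (α σ : Type) where
  start : σ
  accept : Set σ
  rules : Set (σ × List α × σ)
  finite : rules.Finite
  ne : ∀ r ∈ rules, r.2.1 ≠ ([] : List α)
  det : ∀ p w q q', (p, w, q) ∈ rules → (p, w, q') ∈ rules → q = q'

namespace GRLOWJFA
variable {α σ : Type}

def sig (A : GRLOWJFA α σ) (p : σ) : Set (List α) := {w | ∃ q, (p, w, q) ∈ A.rules}

/-- Configurations are triples `(t, p, v)` representing `t p v ∈ Σ* Q Σ*`. -/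
inductive Step (A : GRLOWJFA α σ) :
    List α × σ × List α → List α × σ × List α → Prop
  /-- `t p u x v ↷ t u q v`. -/
  | rule {p q : σ} {x : List α} (t u v : List α) :
      (p, x, q) ∈ A.rules →
      NoSub (A.sig p) u →
      (¬ ∃ u₂ x₁ : List α, u₂ ≠ [] ∧ x₁ ≠ [] ∧ u₂ <:+ u ∧ x₁ <+: x ∧ u₂ ++ x₁ = x) →
      Step A (t, p, u ++ x ++ v) (t ++ u, q, v)
  /-- `x p y ↷ p x y`. -/
  | ret {p : σ} (x y : List α) :
      x ≠ [] → NoSub (A.sig p) y →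
      Step A (x, p, y) ([], p, x ++ y)

def language (A : GRLOWJFA α σ) : Set (List α) :=
  {w | ∃ qf ∈ A.accept, Relation.ReflTransGen (Step A) ([], A.start, w) ([], qf, [])}

end GRLOWJFA

def GRLOWJ {α : Type} (L : Set (List α)) : Prop :=
  ∃ (σ : Type) (_ : Finite σ) (A : GRLOWJFA α σ), A.language = L

/-! ### Generalized left linear one-way jumping finite automata -/

structure GLLOWJFA (α σ : Type) where
  start : σ
  accept : Set σ
  /-- A rule `(q, w, p)` means: from state `p`, delete `w`, move to state `q`. -/
  rules : Set (σ × List α × σ)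
  finite : rules.Finite
  ne : ∀ r ∈ rules, r.2.1 ≠ ([] : List α)
  det : ∀ p w q q', (q, w, p) ∈ rules → (q', w, p) ∈ rules → q = q'

namespace GLLOWJFA
variable {α σ : Type}

def sig (A : GLLOWJFA α σ) (p : σ) : Set (List α) := {w | ∃ q, (q, w, p) ∈ A.rules}

/-- Configurations are triples `(v, p, t)` representing `v p t ∈ Σ* Q Σ*`. -/
inductive Step (A : GLLOWJFA α σ) :
    List α × σ × List α → List α × σ × List α → Prop
  /-- `v q u t ↶ v x u p t`. -/
  | rule {p q : σ} {x : List α} (t u v : List α) :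
      (q, x, p) ∈ A.rules →
      NoSub (A.sig p) u →
      (¬ ∃ x₂ u₁ : List α, x₂ ≠ [] ∧ u₁ ≠ [] ∧ x₂ <:+ x ∧ u₁ <+: u ∧ x₂ ++ u₁ = x) →
      Step A (v ++ x ++ u, p, t) (v, q, u ++ t)
  /-- `y x p ↶ y p x`. -/
  | ret {p : σ} (x y : List α) :
      x ≠ [] → NoSub (A.sig p) y →
      Step A (y, p, x) (y ++ x, p, [])

def language (A : GLLOWJFA α σ) : Set (List α) :=
  {w | ∃ qf ∈ A.accept, Relation.ReflTransGen (Step A) (w, A.start, []) ([], qf, [])}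

end GLLOWJFA

def GLLOWJ {α : Type} (L : Set (List α)) : Prop :=
  ∃ (σ : Type) (_ : Finite σ) (A : GLLOWJFA α σ), A.language = L


namespace Stmt16

abbrev ra (g : ℕ) : List AB := List.replicate g AB.a
abbrev rb (h : ℕ) : List AB := List.replicate h AB.b

lemma append_eq_replicate {l₁ l₂ : List AB} {n : ℕ} {c : AB}
    (h : l₁ ++ l₂ = List.replicate n c) :
    l₁ = List.replicate l₁.length c ∧ l₂ = List.replicate l₂.length c ∧
      l₁.length + l₂.length = n := by
  have hlen : l₁.length + l₂.length = n := by
    have := congrArg List.length h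
    simpa using this
  refine ⟨?_, ?_, hlen⟩
  · rw [List.eq_replicate_iff]
    exact ⟨rfl, fun b hb => List.eq_of_mem_replicate (h ▸ List.mem_append_left l₂ hb)⟩
  · rw [List.eq_replicate_iff]
    exact ⟨rfl, fun b hb => List.eq_of_mem_replicate (h ▸ List.mem_append_right l₁ hb)⟩

/-- Splitting a sorted word `a^g b^h` into two parts. -/
lemma split_sorted {g h : ℕ} {u z : List AB} (hu : ra g ++ rb h = u ++ z) :
    (∃ g₁ g₂, g = g₁ + g₂ ∧ u = ra g₁ ∧ z = ra g₂ ++ rb h) ∨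
    (∃ h₁ h₂, h = h₁ + h₂ ∧ u = ra g ++ rb h₁ ∧ z = rb h₂) := by
  have hulen : u = (ra g ++ rb h).take u.length := by
    rw [hu]; exact (List.take_left (l₁ := u) (l₂ := z)).symm
  have hzlen : z = (ra g ++ rb h).drop u.length := by
    rw [hu]; simp [List.drop_append]
  have hlen : u.length + z.length = g + h := by
    have := congrArg List.length hu
    simpa using this.symm
  obtain ⟨k, hk⟩ : ∃ k, u.length = k := ⟨u.length, rfl⟩
  rw [hk] at hulen hzlen hlen
  by_cases hle : k ≤ g
  · left
    refine ⟨k, g - k, by omega, ?_, ?_⟩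
    · rw [hulen, List.take_append]
      simp only [List.take_replicate, List.length_replicate]
      rw [Nat.min_eq_left hle, Nat.sub_eq_zero_of_le hle]
      simp
    · rw [hzlen, List.drop_append]
      simp only [List.drop_replicate, List.length_replicate]
      rw [Nat.sub_eq_zero_of_le hle]
      simp
  · right
    push_neg at hle
    have hgle : k - g ≤ h := by omega
    refine ⟨k - g, h - (k - g), by omega, ?_, ?_⟩
    · rw [hulen, List.take_append]
      simp only [List.take_replicate, List.length_replicate]
      rw [Nat.min_eq_right (by omega), Nat.min_eq_left hgle]
    · rw [hzlen, List.drop_append]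
      simp only [List.drop_replicate, List.length_replicate]
      rw [Nat.sub_eq_zero_of_le (by omega : g ≤ k)]
      simp

lemma sorted_eq_sorted {g h g' h' : ℕ} (h1 : ra g ++ rb h = ra g' ++ rb h') :
    g = g' ∧ h = h' := by
  constructor
  · have := congrArg (List.count AB.a) h1
    simpa [List.count_append, List.count_replicate] using this
  · have := congrArg (List.count AB.b) h1
    simpa [List.count_append, List.count_replicate] using this

/-- A sorted word `a^m b^m` has no `b` before an `a`. -/
lemma not_sorted_ba (y₁ y₂ y₃ : List AB) (m : ℕ)
    (h : y₁ ++ AB.b :: (y₂ ++ AB.a :: y₃) = ra m ++ rb m) : False := by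
  set r : AB → AB → Prop := fun x y => x = AB.a ∨ y = AB.b with hr
  have hsub : [AB.b, AB.a] <+ y₁ ++ AB.b :: (y₂ ++ AB.a :: y₃) := by
    refine List.Sublist.trans ?_ (List.sublist_append_right y₁ _)
    refine List.Sublist.cons₂ _ ?_
    refine List.Sublist.trans ?_ (List.sublist_append_right y₂ _)
    exact List.Sublist.cons₂ _ (List.nil_sublist y₃)
  rw [h] at hsub
  have hpw : List.Pairwise r (ra m ++ rb m) := by
    rw [List.pairwise_append]
    refine ⟨?_, ?_, ?_⟩
    · rw [List.pairwise_replicate]; right; left; rfl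
    · rw [List.pairwise_replicate]; right; right; rfl
    · intro x hx y hy
      left; exact List.eq_of_mem_replicate hx
  have := hpw.sublist hsub
  rcases List.pairwise_cons.1 this with ⟨h2, _⟩
  have := h2 AB.a (by simp)
  rcases this with h3 | h3 <;> exact absurd h3 (by decide)

/-- `[c]` is an infix of `c^k ` for `k ≥ 1`. -/
lemma single_infix_replicate {c : AB} {k : ℕ} (hk : 1 ≤ k) :
    [c] <:+: List.replicate k c := by
  refine ⟨[], List.replicate (k-1) c, ?_⟩
  simp only [List.nil_append, List.singleton_append]
  rw [← List.replicate_succ]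
  congr 1
  omega

lemma single_infix_left {c : AB} {u z : List AB} (h : [c] <:+: u) : [c] <:+: u ++ z := by
  obtain ⟨s, t, hst⟩ := h
  exact ⟨s, t ++ z, by rw [← hst]; simp⟩

section Auto
variable {σ : Type} {A : GRLOWJFA AB σ}

lemma noSub_nil {p : σ} : NoSub (A.sig p) ([] : List AB) := by
  rintro ⟨w, hw, hinf⟩
  rw [List.infix_nil] at hinf
  obtain ⟨q, hq⟩ := hw
  exact A.ne _ hq hinf

lemma mkStep {p q : σ} {x : List AB} (hr : (p, x, q) ∈ A.rules) (v : List AB) :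
    A.Step ([], p, x ++ v) ([], q, v) := by
  have h := GRLOWJFA.Step.rule (A := A) ([] : List AB) ([] : List AB) v hr noSub_nil ?_
  · simpa using h
  · rintro ⟨u₂, x₁, hu₂, hx₁, hsuf, hpre, heq⟩
    rw [List.suffix_nil] at hsuf
    exact hu₂ hsuf

/-- Chains of rules applied at the front. -/
inductive Spell (A : GRLOWJFA AB σ) : σ → List (List AB) → σ → Prop
  | nil (z : σ) : Spell A z [] z
  | cons {z z' z'' : σ} {x : List AB} {xs : List (List AB)} :
      (z, x, z') ∈ A.rules → Spell A z' xs z'' → Spell A z (x :: xs) z''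

lemma spell_run {z z' : σ} {xs : List (List AB)} (h : Spell A z xs z') :
    ∀ w', Relation.ReflTransGen A.Step ([], z, xs.flatten ++ w') ([], z', w') := by
  induction h with
  | nil z => intro w'; simpa using Relation.ReflTransGen.refl
  | @cons z z1 z2 x xs hr hs ih =>
    intro w'
    have hstep : A.Step ([], z, x ++ (xs.flatten ++ w')) ([], z1, xs.flatten ++ w') :=
      mkStep hr _
    refine Relation.ReflTransGen.head ?_ (ih w')
    simpa [List.append_assoc] using hstep

lemma spell_append {z z' z'' : σ} {xs ys : List (List AB)}
    (h1 : Spell A z xs z') (h2 : Spell A z' ys z'') : Spell A z (xs ++ ys) z'' := by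
  induction h1 with
  | nil => simpa using h2
  | cons hr _ ih => exact Spell.cons hr (ih h2)

lemma spell_det {z z₁ z₂ : σ} {xs : List (List AB)}
    (h1 : Spell A z xs z₁) (h2 : Spell A z xs z₂) : z₁ = z₂ := by
  induction h1 generalizing z₂ with
  | nil => cases h2; rfl
  | @cons z z1 z2 x xs hr hs ih =>
    cases h2 with
    | @cons _ w1 _ _ _ hr' hs' =>
      have hz : w1 = z1 := A.det _ _ _ _ hr' hr
      exact ih (hz ▸ hs')

lemma spell_split {z z' : σ} {xs : List (List AB)} (h : Spell A z xs z') (i : ℕ) :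
    ∃ zi, Spell A z (xs.take i) zi ∧ Spell A zi (xs.drop i) z' := by
  induction h generalizing i with
  | nil z => exact ⟨z, by simp [Spell.nil], by simp [Spell.nil]⟩
  | @cons z z1 z2 x xs hr hs ih =>
    cases i with
    | zero => exact ⟨z, Spell.nil z, Spell.cons hr hs⟩
    | succ n =>
      obtain ⟨zi, h1, h2⟩ := ih n
      exact ⟨zi, Spell.cons hr h1, h2⟩

lemma spell_ne_nil {z z' : σ} {xs : List (List AB)} (h : Spell A z xs z') :
    ∀ x ∈ xs, x ≠ [] := by
  induction h with
  | nil => simp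
  | cons hr _ ih =>
    intro x hx
    rcases List.mem_cons.1 hx with rfl | hx
    · exact A.ne _ hr
    · exact ih x hx

/-- The non-overlap condition in `Step.rule`. -/
def NOV (u x : List AB) : Prop :=
  ¬ ∃ u₂ x₁ : List AB, u₂ ≠ [] ∧ x₁ ≠ [] ∧ u₂ <:+ u ∧ x₁ <+: x ∧ u₂ ++ x₁ = x

lemma skip_overlap_contra {p q : σ} {x u : List AB} {c : AB} {m : ℕ}
    (hr : (p, x, q) ∈ A.rules) (hsub : NoSub (A.sig p) u) (hnov : NOV u x)
    (hx : x = List.replicate m c) (hm : 1 ≤ m) (hsuf : [c] <:+ u) : False := by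
  have hinf : [c] <:+: u := hsuf.isInfix
  rcases Nat.lt_or_ge m 2 with hm2 | hm2
  · have hm1 : m = 1 := by omega
    subst hm1
    exact hsub ⟨x, ⟨q, hr⟩, by rwa [hx]⟩
  · refine hnov ⟨[c], List.replicate (m-1) c, by simp, ?_, hsuf, ?_, ?_⟩
    · simp only [ne_eq, List.replicate_eq_nil_iff]
      omega
    · refine ⟨[c], ?_⟩
      rw [hx, ← List.replicate_succ']
      congr 1
      omega
    · rw [hx, List.singleton_append, ← List.replicate_succ]
      congr 1
      omega

/-- A rule step on a pure-replicate tape never skips. -/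
lemma rep_rule_shape {p q : σ} {u x v : List AB} {j : ℕ} {c : AB}
    (hr : (p, x, q) ∈ A.rules) (hsub : NoSub (A.sig p) u) (hnov : NOV u x)
    (heq : u ++ x ++ v = List.replicate j c) :
    u = [] ∧ x = List.replicate x.length c ∧ 1 ≤ x.length ∧
      v = List.replicate v.length c ∧ x.length + v.length = j := by
  rw [List.append_assoc] at heq
  obtain ⟨hu, hxv, hlen1⟩ := append_eq_replicate heq
  obtain ⟨hx, hv, hlen2⟩ := append_eq_replicate hxv
  have hxne : x ≠ [] := A.ne _ hr
  have hxlen : 1 ≤ x.length := by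
    cases x with
    | nil => exact absurd rfl hxne
    | cons y ys => simp
  have hu0 : u = [] := by
    by_contra hune
    have hulen : 1 ≤ u.length := by
      cases u with
      | nil => exact absurd rfl hune
      | cons y ys => simp
    refine skip_overlap_contra hr hsub hnov hx hxlen ?_
    rw [hu]
    refine ⟨List.replicate (u.length - 1) c, ?_⟩
    rw [← List.replicate_succ']
    congr 1
    omega
  refine ⟨hu0, hx, hxlen, hv, ?_⟩
  rw [hu0] at hlen1
  simp at hlen1
  omega

/-- Shape of a skipping rule step (`u ≠ []`) on a sorted tape `a^g b^h`. -/
lemma skip_shape {p q : σ} {u x v : List AB} {g h : ℕ}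
    (hr : (p, x, q) ∈ A.rules) (hsub : NoSub (A.sig p) u) (hnov : NOV u x)
    (heq : ra g ++ rb h = u ++ (x ++ v)) (hune : u ≠ []) :
    ∃ g' t, 1 ≤ g' ∧ g' ≤ g ∧ 1 ≤ t ∧ t ≤ h ∧ u = ra g' ∧
      x = ra (g - g') ++ rb t ∧ v = rb (h - t) := by
  have hxne : x ≠ [] := A.ne _ hr
  rcases split_sorted heq with ⟨g₁, g₂, hg, hu, hz⟩ | ⟨h₁, h₂, hh, hu, hz⟩
  · -- u = a^g₁ pure
    have hg₁ : 1 ≤ g₁ := by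
      rcases Nat.eq_zero_or_pos g₁ with h0 | h0
      · subst h0; simp [ra] at hu; exact absurd hu hune
      · exact h0
    have hsufa : [AB.a] <:+ u := by
      rw [hu]
      refine ⟨ra (g₁ - 1), ?_⟩
      rw [← List.replicate_succ']
      congr 1
      omega
    rcases split_sorted hz.symm with ⟨m₁, m₂, hm, hx, hv⟩ | ⟨t₁, t₂, ht, hx, hv⟩
    · -- x pure a : impossible
      have hm₁ : 1 ≤ m₁ := by
        rcases Nat.eq_zero_or_pos m₁ with h0 | h0
        · subst h0; simp [ra] at hx; exact absurd hx hxne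
        · exact h0
      exact absurd (skip_overlap_contra hr hsub hnov hx hm₁ hsufa) id
    · -- x = a^g₂ b^t₁
      rcases Nat.eq_zero_or_pos t₁ with h0 | h0
      · -- x pure a again
        subst h0
        simp only [rb, List.replicate_zero, List.append_nil] at hx
        have hg₂ : 1 ≤ g₂ := by
          rcases Nat.eq_zero_or_pos g₂ with h0' | h0'
          · subst h0'; simp [ra] at hx; exact absurd hx hxne
          · exact h0'
        exact absurd (skip_overlap_contra hr hsub hnov hx hg₂ hsufa) id
      · refine ⟨g₁, t₁, hg₁, by omega, h0, by omega, hu, ?_, ?_⟩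
        · rw [hx]; congr 2; omega
        · rw [hv]; congr 1; omega
  · -- u = a^g b^h₁
    rcases Nat.eq_zero_or_pos h₁ with h0 | h0
    · -- u pure a after all
      subst h0
      simp only [rb, List.replicate_zero, List.append_nil] at hu
      have hgpos : 1 ≤ g := by
        rcases Nat.eq_zero_or_pos g with h0' | h0'
        · subst h0'; simp [ra] at hu; exact absurd hu hune
        · exact h0'
      -- x ++ v = b^h₂ : pure b
      obtain ⟨hx, hv, hlen⟩ := append_eq_replicate (hz : x ++ v = List.replicate h₂ AB.b)
      have hxlen : 1 ≤ x.length := by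
        cases x with
        | nil => exact absurd rfl hxne
        | cons y ys => simp
      refine ⟨g, x.length, hgpos, le_refl g, hxlen, by omega, hu, ?_, ?_⟩
      · rw [hx]; simp [ra, rb]
      · rw [hv]; congr 1; omega
    · -- u ends with b : impossible
      exfalso
      obtain ⟨hx, hv, hlen⟩ := append_eq_replicate (hz : x ++ v = List.replicate h₂ AB.b)
      have hxlen : 1 ≤ x.length := by
        cases x with
        | nil => exact absurd rfl hxne
        | cons y ys => simp
      refine skip_overlap_contra hr hsub hnov hx hxlen ?_
      rw [hu]
      refine ⟨ra g ++ rb (h₁ - 1), ?_⟩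
      rw [List.append_assoc, ← List.replicate_succ' (n := h₁ -1) (a := AB.b)]
      congr 2
      omega

/-- `z` goes to `p` by front-deleting `w₁`, in front of any tail. -/
def SimF (A : GRLOWJFA AB σ) (z : σ) (w₁ : List AB) (p : σ) : Prop :=
  ∀ w', Relation.ReflTransGen A.Step ([], z, w₁ ++ w') ([], p, w')

/-- `q` goes to `s` by front-deleting `b^d`, in front of any tail. -/
def SimB (A : GRLOWJFA AB σ) (q s : σ) (d : ℕ) : Prop :=
  ∀ w', Relation.ReflTransGen A.Step ([], q, rb d ++ w') ([], s, w')

lemma front_aux {qf : σ} {c : List AB × σ × List AB}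
    (hrun : Relation.ReflTransGen A.Step c ([], qf, [])) :
    ∀ z w, c = ([], z, w) →
      (∃ xs, Spell A z xs qf ∧ xs.flatten = w) ∨
      (∃ w₁ p u x q v, w = w₁ ++ (u ++ (x ++ v)) ∧ SimF A z w₁ p ∧
        (p, x, q) ∈ A.rules ∧ u ≠ [] ∧ NoSub (A.sig p) u ∧ NOV u x ∧
        Relation.ReflTransGen A.Step (u, q, v) ([], qf, [])) := by
  induction hrun using Relation.ReflTransGen.head_induction_on with
  | refl =>
    intro z w hc
    obtain ⟨rfl, rfl⟩ : qf = z ∧ ([] : List AB) = w := by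
      simpa [Prod.ext_iff] using hc
    exact Or.inl ⟨[], Spell.nil qf, rfl⟩
  | head hstep htail ih =>
    intro z w hc
    subst hc
    cases hstep with
    | ret x y hx hns => exact absurd rfl hx
    | @rule p q x t u v hr hns hnov =>
      by_cases hu : u = []
      · subst hu
        rcases ih q v (by simp) with ⟨xs, hsp, hfl⟩ | ⟨w₁, p', u', x', q', v', hw, hsim, hr', hu', hns', hnov', hcont⟩
        · exact Or.inl ⟨x :: xs, Spell.cons hr hsp, by simp [hfl]⟩
        · refine Or.inr ⟨x ++ w₁, p', u', x', q', v', by rw [hw]; simp, ?_, hr', hu', hns', hnov', hcont⟩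
          intro w'
          refine Relation.ReflTransGen.head ?_ (hsim w')
          have := mkStep hr (w₁ ++ w')
          simpa [List.append_assoc] using this
      · refine Or.inr ⟨[], z, u, x, q, v, by simp, ?_, hr, hu, hns, hnov, by simpa using htail⟩
        intro w'
        simpa using Relation.ReflTransGen.refl

lemma bphase_aux {qf : σ} {c : List AB × σ × List AB}
    (hrun : Relation.ReflTransGen A.Step c ([], qf, [])) :
    ∀ t q y, c = (t, q, y) → ∀ j, y = rb j → t ≠ [] →
      ∃ k s, k ≤ j ∧ SimB A q s (j - k) ∧
        Relation.ReflTransGen A.Step ([], s, t ++ rb k) ([], qf, []) := by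
  induction hrun using Relation.ReflTransGen.head_induction_on with
  | refl =>
    intro t q y hc j hy ht
    exfalso
    obtain ⟨h1, -⟩ : t = [] ∧ qf = q ∧ y = [] := by simpa [Prod.ext_iff] using hc
    exact ht h1
  | head hstep htail ih =>
    intro t q y hc j hy ht
    subst hc
    cases hstep with
    | ret x y hx hns =>
      refine ⟨j, q, le_refl j, ?_, by simpa [hy] using htail⟩
      intro w'
      simp only [Nat.sub_self, rb, List.replicate_zero, List.nil_append]
      exact Relation.ReflTransGen.refl
    | @rule p q' x t₀ u v hr hns hnov =>
      obtain ⟨hu0, hx, hxlen, hv, hlen⟩ := rep_rule_shape hr hns hnov hy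
      subst hu0
      obtain ⟨k, s, hk, hsim, hcont⟩ :=
        ih t q' v (by simp) v.length hv ht
      refine ⟨k, s, by omega, ?_, hcont⟩
      intro w'
      have hjk : j - k = x.length + (v.length - k) := by omega
      refine Relation.ReflTransGen.head ?_ (hsim w')
      have hst := mkStep hr (rb (v.length - k) ++ w')
      rw [hjk]
      have : rb (x.length + (v.length - k)) = x ++ rb (v.length - k) := by
        rw [rb, List.replicate_add, ← hx]
      rw [this, List.append_assoc]
      exact hst

lemma spell_mem {z z' : σ} {xs : List (List AB)} (h : Spell A z xs z') :
    ∀ x ∈ xs, ∃ p q, (p, x, q) ∈ A.rules := by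
  induction h with
  | nil => simp
  | @cons z z1 z2 x xs hr hs ih =>
    intro y hy
    rcases List.mem_cons.1 hy with rfl | hy
    · exact ⟨z, z1, hr⟩
    · exact ih y hy

end Auto

lemma flatten_le {K : ℕ} : ∀ (l : List (List AB)), (∀ x ∈ l, x.length ≤ K) →
    l.flatten.length ≤ l.length * K := by
  intro l
  induction l with
  | nil => simp
  | cons y t ih =>
    intro hb
    simp only [List.flatten_cons, List.length_append, List.length_cons]
    have h1 := hb y (by simp)
    have h2 := ih (fun x hx => hb x (by simp [hx]))
    calc y.length + t.flatten.length ≤ K + t.length * K := by omega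
    _ = (t.length + 1) * K := by ring

lemma flatten_pos : ∀ (l : List (List AB)), l ≠ [] → (∀ x ∈ l, x ≠ []) →
    1 ≤ l.flatten.length := by
  intro l hl hx
  cases l with
  | nil => exact absurd rfl hl
  | cons y t =>
    have hy : y ≠ [] := hx y (by simp)
    have : 1 ≤ y.length := by
      cases y with
      | nil => exact absurd rfl hy
      | cons c cs => simp
    simp only [List.flatten_cons, List.length_append]
    omega

section Main
variable {σ : Type} (A : GRLOWJFA AB σ)

/-- The target language. -/
def Lab : Set (List AB) :=
  {w : List AB | ∃ n : ℕ, w = List.replicate n AB.a ++ List.replicate n AB.b}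

lemma main [Finite σ] (hL : A.language = Lab) : False := by
  classical
  haveI : Fintype σ := Fintype.ofFinite σ
  set C := Fintype.card σ with hC
  set K := A.finite.toFinset.sup (fun r => r.2.1.length) + 1 with hK
  have hKrule : ∀ {p : σ} {x : List AB} {q : σ}, (p, x, q) ∈ A.rules → x.length ≤ K - 1 := by
    intro p x q h
    have h2 := Finset.le_sup (f := fun r : σ × List AB × σ => r.2.1.length)
      (A.finite.mem_toFinset.2 h)
    simp only at h2
    omega
  have hK1 : 1 ≤ K := by omega
  set n := C * K + 1 with hn
  -- the word a^n b^n is accepted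
  have hmem : (ra n ++ rb n) ∈ A.language := by
    rw [hL]; exact ⟨n, rfl⟩
  obtain ⟨qf, hqf, hrun⟩ := hmem
  rcases front_aux hrun A.start (ra n ++ rb n) rfl with
    ⟨xs, hsp, hfl⟩ | ⟨w₁, p, u, x, q, v, hw, hsim, hr, hu, hns, hnov, hcont⟩
  · -- no-skip case: pumping
    have hflen : xs.flatten.length = n + n := by rw [hfl]; simp
    have hwordsK : ∀ x ∈ xs, x.length ≤ K := by
      intro x hx
      obtain ⟨p, q, hpq⟩ := spell_mem hsp x hx
      have := hKrule hpq
      omega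
    have hxslen : C + 1 ≤ xs.length := by
      by_contra hcon
      push_neg at hcon
      have h1 := flatten_le xs hwordsK
      have h2 : xs.length * K ≤ C * K := Nat.mul_le_mul_right K (by omega)
      omega
    -- pigeonhole
    have hcard : Fintype.card σ < Fintype.card (Fin (C + 1)) := by simp [hC]
    set f : Fin (C + 1) → σ := fun i => Classical.choose (spell_split hsp i.1) with hf
    obtain ⟨i0, j0, hne, hfeq⟩ := Fintype.exists_ne_map_eq_of_card_lt f hcard
    -- wlog i < j
    have hmain : ∀ i j : ℕ, i < j → j ≤ C → ∀ z,
        Spell A A.start (xs.take i) z → Spell A z (xs.drop i) qf →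
        Spell A A.start (xs.take j) z → False := by
      intro i j hij hjC z h1 h2 h3
      obtain ⟨zm, hmid1, hmid2⟩ := spell_split h2 (j - i)
      have htake : xs.take j = xs.take i ++ (xs.drop i).take (j - i) := by
        conv_lhs => rw [show j = i + (j - i) by omega, List.take_add]
      have hzm : zm = z := by
        refine spell_det ?_ h3
        rw [htake]
        exact spell_append h1 hmid1
      subst hzm
      have hdrop : (xs.drop i).drop (j - i) = xs.drop j := by
        rw [List.drop_drop]
        congr 1
        omega
      rw [hdrop] at hmid2
      set mid := (xs.drop i).take (j - i) with hmiddef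
      -- the pumped spell
      have hpump : Spell A A.start (xs.take i ++ (mid ++ (mid ++ xs.drop j))) qf :=
        spell_append h1 (spell_append hmid1 (spell_append hmid1 hmid2))
      -- flatten analysis
      set T₁ := (xs.take i).flatten with hT₁
      set M := mid.flatten with hM
      set R := (xs.drop j).flatten with hR
      have hxs : xs.take i ++ (mid ++ xs.drop j) = xs := by
        rw [← List.append_assoc, ← htake, List.take_append_drop]
      have horig : T₁ ++ (M ++ R) = ra n ++ rb n := by
        have hfla : (xs.take i ++ (mid ++ xs.drop j)).flatten = T₁ ++ (M ++ R) := by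
          simp [List.flatten_append, hT₁, hM, hR]
        rw [← hfla, hxs, hfl]
      have hmidne : mid ≠ [] := by
        have hml : mid.length = j - i := by
          rw [hmiddef, List.length_take, List.length_drop]
          omega
        intro hcon
        rw [hcon] at hml
        simp at hml
        omega
      have hMpos : 1 ≤ M.length := by
        refine flatten_pos mid hmidne ?_
        intro y hy
        have hyxs : y ∈ xs := by
          have hy1 : y ∈ xs.drop i := List.mem_of_mem_take (by rw [← hmiddef]; exact hy)
          exact List.mem_of_mem_drop hy1
        obtain ⟨p', q', hpq⟩ := spell_mem hsp y hyxs
        exact A.ne _ hpq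
      have hTMlen : T₁.length + M.length ≤ n - 1 := by
        have h1' : (xs.take j).flatten.length ≤ j * K := by
          have hb := flatten_le (K := K) (xs.take j)
            (fun y hy => hwordsK y (List.mem_of_mem_take hy))
          have hlt : (xs.take j).length ≤ j := List.length_take_le j xs
          exact le_trans hb (Nat.mul_le_mul_right K hlt)
        rw [htake, List.flatten_append] at h1'
        simp only [List.length_append] at h1'
        have h2' : j * K ≤ C * K := Nat.mul_le_mul_right K (by omega)
        rw [← hT₁, ← hM] at h1'
        omega
      -- T₁ ++ M is a prefix of a^n
      rcases split_sorted (horig.symm.trans (by rw [List.append_assoc]) :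
          ra n ++ rb n = (T₁ ++ M) ++ R) with
        ⟨g₁, g₂, hg, hTM, hRR⟩ | ⟨h₁, h₂, hh, hTM, hRR⟩
      swap
      · -- impossible by length
        have := congrArg List.length hTM
        simp at this
        omega
      obtain ⟨hT₁', hM', hsum⟩ := append_eq_replicate (hTM : T₁ ++ M = List.replicate g₁ AB.a)
      -- the pumped word is a^(n+Δ) b^n
      set Δ := M.length with hΔ
      have hnew : (xs.take i ++ (mid ++ (mid ++ xs.drop j))).flatten
          = ra (n + Δ) ++ rb n := by
        rw [List.flatten_append, List.flatten_append, List.flatten_append]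
        rw [← hT₁, ← hM, ← hR, hT₁', hM', hRR]
        have harith : n + Δ = T₁.length + (Δ + (Δ + g₂)) := by omega
        rw [harith]
        simp only [ra, List.replicate_add, List.append_assoc]
      -- acceptance of the pumped word
      have haccept : (ra (n + Δ) ++ rb n) ∈ A.language := by
        refine ⟨qf, hqf, ?_⟩
        have hrun2 := spell_run hpump []
        rw [hnew] at hrun2
        simpa using hrun2
      rw [hL] at haccept
      obtain ⟨m, hm⟩ := haccept
      obtain ⟨e1, e2⟩ := sorted_eq_sorted hm
      omega
    have hspec : ∀ i : Fin (C + 1), Spell A A.start (xs.take i.1) (f i) ∧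
        Spell A (f i) (xs.drop i.1) qf := fun i => Classical.choose_spec (spell_split hsp i.1)
    rcases Nat.lt_or_ge i0.1 j0.1 with h | h
    · exact hmain i0.1 j0.1 h (by omega) (f i0) (hspec i0).1 (hspec i0).2
        (hfeq ▸ (hspec j0).1)
    · have hlt : j0.1 < i0.1 := by
        rcases Nat.lt_or_ge j0.1 i0.1 with h' | h'
        · exact h'
        · exfalso; exact hne (Fin.ext (by omega))
      exact hmain j0.1 i0.1 hlt (by omega) (f j0) (hspec j0).1 (hspec j0).2
        (hfeq ▸ (hspec i0).1)
  · -- skip case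
    rcases split_sorted hw with ⟨g₁, G, hg, hw₁, hz⟩ | ⟨h₁, h₂, hh, hw₁, hz⟩
    swap
    · -- tape is pure b : no skip possible
      have heq : u ++ x ++ v = List.replicate h₂ AB.b := by
        rw [List.append_assoc]; exact hz
      obtain ⟨hu0, -⟩ := rep_rule_shape hr hns hnov heq
      exact hu hu0
    · obtain ⟨g', t, hg'1, hg'G, ht1, htn, hu', hx', hv'⟩ :=
        skip_shape hr hns hnov hz.symm hu
      rw [hu', hv'] at hcont
      have hrane : ra g' ≠ [] := by
        simp only [ra, ne_eq, List.replicate_eq_nil_iff]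
        omega
      obtain ⟨k, s, hk, hsim2, hcont2⟩ :=
        bphase_aux hcont (ra g') q (rb (n - t)) rfl (n - t) rfl hrane
      -- the reordered word
      set W := w₁ ++ (x ++ (rb (n - t - k) ++ (ra g' ++ rb k))) with hW
      have haccept : W ∈ A.language := by
        refine ⟨qf, hqf, ?_⟩
        refine Relation.ReflTransGen.trans (hsim _) ?_
        refine Relation.ReflTransGen.head (mkStep hr _) ?_
        exact Relation.ReflTransGen.trans (hsim2 _) hcont2
      rw [hL] at haccept
      obtain ⟨m, hm⟩ := haccept
      refine not_sorted_ba (w₁ ++ (ra (G - g') ++ rb (t - 1))) (rb (n - t - k))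
        (ra (g' - 1) ++ rb k) m ?_
      rw [← hm, hW, hx']
      have hbt : rb t = rb (t - 1) ++ [AB.b] := by
        rw [← List.replicate_succ']
        congr 1
        omega
      have hag : ra g' = AB.a :: ra (g' - 1) := by
        rw [← List.replicate_succ]
        congr 1
        omega
      rw [hbt, hag]
      simp [List.append_assoc]

end Main
end Stmt16

theorem stmt_16 :
    ¬ GRLOWJ {w : List AB | ∃ n : ℕ,
      w = List.replicate n AB.a ++ List.replicate n AB.b} := by
  rintro ⟨σ, hfin, A, hL⟩
  exact Stmt16.main A hL
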